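/- Let $m\ge 2$, let $\widetilde{Y}$ be an abstract van Kampen 2-complex with $k$ abstract relators whose $i$-th relator has $\eta_i$ free-to-fill abstract letters. Then the number of fillings of $\widetilde{Y}$ by van Kampen 2-complexes over the alphabet $X_m^{\pm}$ (i.e., compatible edge-labelings together with the induced relator words) is at most $\prod_{i=1}^{k} 2m\,(2m-1)^{\eta_i - 1}$. -/
import Mathlib


open Finset

noncomputable section

/-- Lexicographic order on abstract letters `(i, j)`. -/
def lexLe (x y : ℕ × ℕ) : Prop := x.1 < y.1 ∨ (x.1 = y.1 ∧ x.2 ≤ y.2)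

variable {k : ℕ} {E F : Type}

/-- The abstract letter `(i, j)` decorates the geometric edge `e` if some face labeled
`i` has `e` as its `j`-th boundary edge. -/
def Decorates (L : Fin k → ℕ) (lab : F → Fin k) (bd : F → ℕ → E)
    (e : E) (i : Fin k) (j : ℕ) : Prop :=
  j < L i ∧ ∃ f : F, lab f = i ∧ bd f j = e

/-- The abstract letter `(i, j)` is *free-to-fill* if on every geometric edge that it
decorates it is the (lexicographically) minimal decoration. -/
def FreeToFill (L : Fin k → ℕ) (lab : F → Fin k) (bd : F → ℕ → E)
    (i : Fin k) (j : ℕ) : Prop :=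
  j < L i ∧ ∀ e : E, Decorates L lab bd e i j →
    ∀ (i' : Fin k) (j' : ℕ), Decorates L lab bd e i' j' → lexLe (i.1, j) (i'.1, j')

/-- Numeric encoding of a letter. -/
private def enc {m : ℕ} (v : Fin m × Bool) : ℕ := 2 * v.1.1 + (if v.2 then 1 else 0)

private lemma enc_lt {m : ℕ} (v : Fin m × Bool) : enc v < 2 * m := by
  have := v.1.2; unfold enc; split <;> omega

private lemma enc_inj {m : ℕ} {v v' : Fin m × Bool} (h : enc v = enc v') : v = v' := by
  obtain ⟨⟨a, ha⟩, b⟩ := v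
  obtain ⟨⟨a', ha'⟩, b'⟩ := v'
  unfold enc at h
  cases b <;> cases b' <;> simp_all <;> omega

/-- Encoding a letter known to differ from a forbidden letter `t` into `Fin (2m-1)`. -/
private def code {m : ℕ} (t v : Fin m × Bool) : Fin (2 * m - 1) :=
  ⟨if enc v < enc t then enc v else enc v - 1, by
    have hv := enc_lt v
    have ht := enc_lt t
    have hm : 0 < m := v.1.pos
    split <;> omega⟩

private lemma code_inj {m : ℕ} {t v v' : Fin m × Bool} (hv : v ≠ t) (hv' : v' ≠ t)
    (h : code t v = code t v') : v = v' := by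
  have h1 : enc v ≠ enc t := fun h' => hv (enc_inj h')
  have h2 : enc v' ≠ enc t := fun h' => hv' (enc_inj h')
  have h3 := congrArg Fin.val h
  simp only [code] at h3
  apply enc_inj
  split_ifs at h3 <;> omega

/-- let `m ≥ 2` and let `Ỹ` be an abstract van Kampen 2-complex with `k`
abstract relators whose `i`-th relator has `ηᵢ` free-to-fill abstract letters.  Then the
number of fillings of `Ỹ` over the alphabet `Xₘ± = {x₁±, …, xₘ±}` is at most
`∏ᵢ 2m (2m-1)^(ηᵢ - 1)`.

The complex is recorded by geometric edges `E`, faces `F`, relator lengths `L`, face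
labels `lab`, boundary maps `bd` (the `j`-th geometric edge of `∂f`) and traversal
directions `dir` (the orientation with which `∂f` traverses its `j`-th edge).  A letter
of `Xₘ±` is a pair in `Fin m × Bool`, whose inverse flips the `Bool`.  A filling is a
choice of words `w i : Fin (L i) → Fin m × Bool` (so that relator `i` is the word
`w i 0 ⋯ w i (L i - 1)`) such that each word is cyclically reduced and the induced edge
labels are consistent: two boundary positions traversing the same geometric edge carry
the same letter (up to inversion according to the directions). -/
theorem number_of_fillings_le
    (m : ℕ) (hm : 2 ≤ m) [Fintype E] [Fintype F]
    (L : Fin k → ℕ) (hL : ∀ i, 0 < L i)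
    (lab : F → Fin k) (bd : F → ℕ → E) (dir : F → ℕ → Bool)
    (hni : ∀ e : E, ∃ f : F, ∃ j < L (lab f), bd f j = e) :
    Nat.card {w : (i : Fin k) → Fin (L i) → Fin m × Bool //
        (∀ (i : Fin k) (j : Fin (L i)),
          w i ⟨(j.1 + 1) % L i, Nat.mod_lt _ (hL i)⟩ ≠ ((w i j).1, !(w i j).2)) ∧
        (∀ (f f' : F) (j j' : ℕ) (hj : j < L (lab f)) (hj' : j' < L (lab f')),
          bd f j = bd f' j' →
            w (lab f) ⟨j, hj⟩ =
              (if dir f j = dir f' j' then w (lab f') ⟨j', hj'⟩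
               else ((w (lab f') ⟨j', hj'⟩).1, !(w (lab f') ⟨j', hj'⟩).2)))}
      ≤ ∏ i : Fin k,
          2 * m * (2 * m - 1) ^ (Nat.card {j : ℕ // FreeToFill L lab bd i j} - 1) := by
  classical
  set N := Finset.univ.sup L with hN
  have hLN : ∀ i, L i ≤ N := fun i => Finset.le_sup (Finset.mem_univ i)
  set S : Fin k → Finset ℕ :=
    fun i => (Finset.range (L i)).filter (fun j => FreeToFill L lab bd i j) with hS
  have hS_lt : ∀ i j, j ∈ S i → j < L i := fun i j hj =>
    Finset.mem_range.1 (Finset.mem_filter.1 hj).1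
  have hS_free : ∀ i j, j ∈ S i ↔ FreeToFill L lab bd i j := by
    intro i j
    constructor
    · exact fun hj => (Finset.mem_filter.1 hj).2
    · exact fun hj => Finset.mem_filter.2 ⟨Finset.mem_range.2 hj.1, hj⟩
  set mn : Fin k → ℕ := fun i => if h : (S i).Nonempty then (S i).min' h else 0 with hmn
  set R : Fin k → Finset ℕ := fun i => (S i).erase (mn i) with hR
  have hRlt : ∀ (i : Fin k) (p : {x // x ∈ R i}), (p : ℕ) < L i := fun i p =>
    hS_lt i p.1 (Finset.mem_of_mem_erase p.2)
  have hRlt' : ∀ (i : Fin k) (p : {x // x ∈ R i}), (p : ℕ) - 1 < L i := fun i p =>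
    lt_of_le_of_lt (Nat.sub_le _ _) (hRlt i p)
  have hmin_lt : ∀ (i : Fin k) (h : (S i).Nonempty), (S i).min' h < L i := fun i h =>
    hS_lt i _ ((S i).min'_mem h)
  have hm0 : 0 < m := by omega
  refine le_trans (Nat.card_le_card_of_injective
    (β := ∀ i : Fin k, (Fin m × Bool) × ({x // x ∈ R i} → Fin (2 * m - 1)))
    (fun w => fun i =>
      ((if h : (S i).Nonempty then w.1 i ⟨(S i).min' h, hmin_lt i h⟩ else (⟨0, hm0⟩, true)),
        fun p => code ((w.1 i ⟨(p : ℕ) - 1, hRlt' i p⟩).1,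
            !(w.1 i ⟨(p : ℕ) - 1, hRlt' i p⟩).2)
          (w.1 i ⟨(p : ℕ), hRlt i p⟩))) ?_) ?_
  · -- injectivity
    intro w w' h
    have main : ∀ n (i : Fin k) (j : ℕ) (hj : j < L i), i.1 * (N + 1) + j ≤ n →
        w.1 i ⟨j, hj⟩ = w'.1 i ⟨j, hj⟩ := by
      intro n
      induction n using Nat.strong_induction_on with
      | _ n IH =>
        intro i j hj hn
        by_cases hfree : FreeToFill L lab bd i j
        · have hjS : j ∈ S i := (hS_free i j).2 hfree
          have hne : (S i).Nonempty := ⟨j, hjS⟩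
          have hmneq : mn i = (S i).min' hne := by
            simp only [hmn]; exact dif_pos hne
          by_cases hjmn : j = mn i
          · have h1 : (if h' : (S i).Nonempty then w.1 i ⟨(S i).min' h', hmin_lt i h'⟩
                  else (⟨0, hm0⟩, true))
                = (if h' : (S i).Nonempty then w'.1 i ⟨(S i).min' h', hmin_lt i h'⟩
                  else (⟨0, hm0⟩, true)) :=
              congrArg (fun t => (t i).1) h
            simp only [dif_pos hne] at h1
            have hjmin : j = (S i).min' hne := hjmn.trans hmneq
            subst hjmin
            exact h1
          · have hjR : j ∈ R i := by
              rw [hR]; exact Finset.mem_erase.2 ⟨hjmn, hjS⟩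
            have hminle : mn i ≤ j := hmneq ▸ (S i).min'_le j hjS
            have hj1 : 1 ≤ j := by omega
            set p : {x // x ∈ R i} := ⟨j, hjR⟩ with hp
            have h2 : code ((w.1 i ⟨j - 1, hRlt' i p⟩).1, !(w.1 i ⟨j - 1, hRlt' i p⟩).2)
                  (w.1 i ⟨j, hRlt i p⟩)
                = code ((w'.1 i ⟨j - 1, hRlt' i p⟩).1, !(w'.1 i ⟨j - 1, hRlt' i p⟩).2)
                  (w'.1 i ⟨j, hRlt i p⟩) :=
              congrArg (fun t => (t i).2 p) h
            have hprev : w.1 i ⟨j - 1, hRlt' i p⟩ = w'.1 i ⟨j - 1, hRlt' i p⟩ :=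
              IH (i.1 * (N + 1) + (j - 1)) (by omega) i (j - 1) (hRlt' i p) le_rfl
            rw [hprev] at h2
            have hmodeq : (⟨(j - 1 + 1) % L i, Nat.mod_lt _ (hL i)⟩ : Fin (L i))
                = ⟨j, hRlt i p⟩ :=
              Fin.ext (by simp; rw [Nat.sub_add_cancel hj1, Nat.mod_eq_of_lt hj])
            have hne1 : w.1 i ⟨j, hRlt i p⟩
                ≠ ((w.1 i ⟨j - 1, hRlt' i p⟩).1, !(w.1 i ⟨j - 1, hRlt' i p⟩).2) := by
              have hred := w.2.1 i ⟨j - 1, hRlt' i p⟩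
              rw [hmodeq] at hred
              exact hred
            have hne2 : w'.1 i ⟨j, hRlt i p⟩
                ≠ ((w.1 i ⟨j - 1, hRlt' i p⟩).1, !(w.1 i ⟨j - 1, hRlt' i p⟩).2) := by
              have hred := w'.2.1 i ⟨j - 1, hRlt' i p⟩
              rw [hmodeq, ← hprev] at hred
              exact hred
            rw [hprev] at hne1
            exact code_inj (hprev ▸ hne1) (hprev ▸ hne2) h2
        · have hex : ∃ e, Decorates L lab bd e i j ∧ ∃ i' j',
              Decorates L lab bd e i' j' ∧ ¬ lexLe (i.1, j) (i'.1, j') := by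
            unfold FreeToFill at hfree
            push_neg at hfree
            exact hfree hj
          obtain ⟨e, ⟨hjL, f, hf, hbf⟩, i', j', ⟨hj'L, f', hf', hbf'⟩, hlex⟩ := hex
          have hlt : i'.1 < i.1 ∨ (i'.1 = i.1 ∧ j' < j) := by
            unfold lexLe at hlex; push_neg at hlex; omega
          have hμ : i'.1 * (N + 1) + j' < i.1 * (N + 1) + j := by
            rcases hlt with hlt | ⟨heq, hlt⟩
            · have h1 : (i'.1 + 1) * (N + 1) ≤ i.1 * (N + 1) :=
                Nat.mul_le_mul_right _ hlt
              have h2 : j' ≤ N := le_trans (le_of_lt hj'L) (hLN i')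
              rw [add_mul, one_mul] at h1
              omega
            · rw [heq]; omega
          have hIH := IH (i'.1 * (N + 1) + j') (by omega) i' j' hj'L le_rfl
          subst hf
          subst hf'
          have hcw := w.2.2 f f' j j' hjL hj'L (hbf.trans hbf'.symm)
          have hcw' := w'.2.2 f f' j j' hjL hj'L (hbf.trans hbf'.symm)
          rw [hIH] at hcw
          exact hcw.trans hcw'.symm
    apply Subtype.ext
    funext i j
    exact main (i.1 * (N + 1) + j.1) i j.1 j.2 le_rfl
  · -- cardinality computation
    have hη : ∀ i, Nat.card {j : ℕ // FreeToFill L lab bd i j} = (S i).card := by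
      intro i
      rw [Nat.card_congr (Equiv.subtypeEquivRight (fun j => (hS_free i j).symm))]
      exact Nat.card_eq_finsetCard (S i)
    have hRcard : ∀ i, (R i).card = (S i).card - 1 := by
      intro i
      by_cases hne : (S i).Nonempty
      · have hmem : mn i ∈ S i := by
          simp only [hmn]; rw [dif_pos hne]; exact (S i).min'_mem hne
        rw [hR]
        exact Finset.card_erase_of_mem hmem
      · rw [Finset.not_nonempty_iff_eq_empty] at hne
        simp [hR, hne]
    rw [Nat.card_pi]
    apply le_of_eq
    refine Finset.prod_congr rfl (fun i _ => ?_)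
    rw [Nat.card_prod, Nat.card_fun, Nat.card_eq_finsetCard, hRcard, hη]
    congr 1
    · rw [Nat.card_eq_fintype_card]; simp [Fintype.card_prod]; ring
    · congr 1
      rw [Nat.card_eq_fintype_card, Fintype.card_fin]
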